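/- For n ≥ 2, the submonoid of the monoid (p_n^{(2)}, ∘) generated by the set G_n = {(A^1,1), (A^1,A^1), (1,A^{12}), (A^{12},A^{12})} ∪ {(σ_i,σ_i) : 1 ≤ i ≤ n−1} is all of p_n^{(2)}; that is, every 2-ramified partition of [n] ⊔ [n]′ is a finite ∘-product of elements of G_n. -/

import Mathlib

attribute [local instance] Classical.propDecidable

namespace RamifiedPartition

/-- The two-row set `[n] ⊔ [n]′`. -/
abbrev Row2 (n : ℕ) := Sum (Fin n) (Fin n)

/-- `p_n`: partitions (equivalence relations) of `[n] ⊔ [n]′`,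
with `a ≤ b` meaning that `a` refines `b`. -/
abbrev PN (n : ℕ) := Setoid (Row2 n)

/-- The three-row set `[n] ⊔ [n]′ ⊔ [n]″`. -/
abbrev Row3 (n : ℕ) := Sum (Fin n) (Sum (Fin n) (Fin n))

variable {n : ℕ}

/-- Embedding of the two-row set as rows 1,2 of the three-row set. -/
def emb12 : Row2 n → Row3 n := Sum.elim Sum.inl (fun i => Sum.inr (Sum.inl i))

/-- Embedding of the two-row set as rows 2,3 of the three-row set. -/
def emb23 : Row2 n → Row3 n :=
  Sum.elim (fun i => Sum.inr (Sum.inl i)) (fun i => Sum.inr (Sum.inr i))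

/-- Embedding of the two-row set as rows 1,3 of the three-row set. -/
def emb13 : Row2 n → Row3 n := Sum.elim Sum.inl (fun i => Sum.inr (Sum.inr i))

/-- `D_u(a,b)`: the equivalence relation on the three-row set generated by `a`
placed on rows 1,2 and `b` placed on rows 2,3. -/
def Du (a b : PN n) : Setoid (Row3 n) :=
  Relation.EqvGen.setoid (fun x y =>
    (∃ u v : Row2 n, a.r u v ∧ x = emb12 u ∧ y = emb12 v) ∨
    (∃ u v : Row2 n, b.r u v ∧ x = emb23 u ∧ y = emb23 v))

/-- The composite `a ∘ b`: the restriction of `D_u(a,b)` to rows 1,3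
(relabelled as `[n] ⊔ [n]′`). -/
def comp (a b : PN n) : PN n := Setoid.comap emb13 (Du a b)

/-- `c(a,b)`: the number of classes of `D_u(a,b)` contained entirely in the
middle row `[n]′`. -/
noncomputable def cnum (a b : PN n) : ℕ :=
  Nat.card {C : Quotient (Du a b) //
    ∀ x : Row3 n, Quotient.mk (Du a b) x = C → ∃ i : Fin n, x = Sum.inr (Sum.inl i)}

/-- The identity partition of `[n] ⊔ [n]′`, with parts `{i, i′}` for `i = 1,…,n`. -/
def oneP (n : ℕ) : PN n := Setoid.ker (Sum.elim id id)

end RamifiedPartition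

namespace RamifiedPartition

variable {n : ℕ}

/-- `A^i ∈ p_n`: obtained from the identity partition by replacing the part
`{i,i′}` by the two singleton parts `{i}, {i′}`. -/
def Ai (i : Fin n) : PN n :=
  Setoid.ker (Sum.elim (fun j => (j, false)) (fun j => (j, decide (j = i))))

/-- `A^{ij} ∈ p_n`: obtained from the identity partition by replacing the parts
`{i,i′}, {j,j′}` by the single part `{i,i′,j,j′}`. -/
def Aij (i j : Fin n) : PN n :=
  Setoid.ker (Sum.elim (fun l => if l = j then i else l) (fun l => if l = j then i else l))

/-- `σ` for a transposition `(i j)`: the partition with parts `{i,j′}`, `{j,i′}`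
and `{l,l′}` for `l ∉ {i,j}`. -/
def sigP (i j : Fin n) : PN n :=
  Setoid.ker (Sum.elim id (Equiv.swap i j))

/-- componentwise composite on `p_n × p_n` -/
def rcomp (a b : PN n × PN n) : PN n × PN n := (comp a.1 b.1, comp a.2 b.2)

/-- The generating set
`G_n = {(A¹,1), (A¹,A¹), (1,A¹²), (A¹²,A¹²)} ∪ {(σ_i,σ_i) : 1 ≤ i ≤ n−1}`. -/
def Gset (n : ℕ) (hn : 2 ≤ n) : Set (PN n × PN n) :=
  {(Ai ⟨0, by omega⟩, oneP n),
   (Ai ⟨0, by omega⟩, Ai ⟨0, by omega⟩),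
   (oneP n, Aij ⟨0, by omega⟩ ⟨1, by omega⟩),
   (Aij ⟨0, by omega⟩ ⟨1, by omega⟩, Aij ⟨0, by omega⟩ ⟨1, by omega⟩)} ∪
  {p | ∃ (i : ℕ) (h : i + 1 < n),
    p = (sigP ⟨i, by omega⟩ ⟨i + 1, h⟩, sigP ⟨i, by omega⟩ ⟨i + 1, h⟩)}

section Aux
variable {n : ℕ}

def proj : Row2 n → Fin n := Sum.elim id id

/-- detach point `c` to a singleton -/
def detach (c : Row2 n) (s : PN n) : PN n where
  r x y := x = y ∨ (x ≠ c ∧ y ≠ c ∧ s.r x y)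
  iseqv := by
    refine ⟨fun x => Or.inl rfl, ?_, ?_⟩
    · rintro x y (rfl | ⟨hx, hy, h⟩)
      · exact Or.inl rfl
      · exact Or.inr ⟨hy, hx, s.symm' h⟩
    · rintro x y z (rfl | ⟨hx, hy, h⟩) h2
      · exact h2
      · rcases h2 with rfl | ⟨hy2, hz, h2⟩
        · exact Or.inr ⟨hx, hy, h⟩
        · exact Or.inr ⟨hx, hz, s.trans' h h2⟩

/-- join points `c`,`d` -/
def joinP (c d : Row2 n) (s : PN n) : PN n where
  r x y := s.r x y ∨ (s.r x c ∧ s.r d y) ∨ (s.r x d ∧ s.r c y)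
  iseqv := by
    refine ⟨fun x => Or.inl (s.refl' x), ?_, ?_⟩
    · rintro x y (h | ⟨h1, h2⟩ | ⟨h1, h2⟩)
      · exact Or.inl (s.symm' h)
      · exact Or.inr (Or.inr ⟨s.symm' h2, s.symm' h1⟩)
      · exact Or.inr (Or.inl ⟨s.symm' h2, s.symm' h1⟩)
    · rintro x y z (h | ⟨h1, h2⟩ | ⟨h1, h2⟩) (h' | ⟨h1', h2'⟩ | ⟨h1', h2'⟩)
      · exact Or.inl (s.trans' h h')
      · exact Or.inr (Or.inl ⟨s.trans' h h1', h2'⟩)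
      · exact Or.inr (Or.inr ⟨s.trans' h h1', h2'⟩)
      · exact Or.inr (Or.inl ⟨h1, s.trans' h2 h'⟩)
      · exact Or.inl (s.trans' (s.trans' h1 (s.symm' (s.trans' h2 h1'))) h2')
      · exact Or.inl (s.trans' h1 h2')
      · exact Or.inr (Or.inr ⟨h1, s.trans' h2 h'⟩)
      · exact Or.inl (s.trans' h1 h2')
      · exact Or.inl (s.trans' (s.trans' h1 (s.symm' (s.trans' h2 h1'))) h2')

/-- permutation partition -/
def permP (f : Equiv.Perm (Fin n)) : PN n := Setoid.ker (Sum.elim id f)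

lemma sigP_eq_permP (i j : Fin n) : sigP i j = permP (Equiv.swap i j) := rfl

/-- collapse rows 2,3 of the three-row set, twisting row 3 by `f` -/
def Nf (f : Fin n → Fin n) : Row3 n → Row2 n :=
  Sum.elim Sum.inl (Sum.elim Sum.inr (fun q => Sum.inr (f q)))

@[simp] lemma Nf_emb12 (f : Fin n → Fin n) (u : Row2 n) : Nf f (emb12 u) = u := by
  cases u <;> rfl

@[simp] lemma Nf_emb13_inl (f : Fin n → Fin n) (i : Fin n) :
    Nf f (emb13 (Sum.inl i)) = Sum.inl i := rfl

@[simp] lemma Nf_emb13_inr (f : Fin n → Fin n) (q : Fin n) :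
    Nf f (emb13 (Sum.inr q)) = Sum.inr (f q) := rfl

@[simp] lemma Nf_emb23_inl (f : Fin n → Fin n) (p : Fin n) :
    Nf f (emb23 (Sum.inl p)) = Sum.inr p := rfl

@[simp] lemma Nf_emb23_inr (f : Fin n → Fin n) (q : Fin n) :
    Nf f (emb23 (Sum.inr q)) = Sum.inr (f q) := rfl

lemma Du_step12 {a b : PN n} {u v : Row2 n} (h : a.r u v) :
    (Du a b).r (emb12 u) (emb12 v) :=
  Relation.EqvGen.rel _ _ (Or.inl ⟨u, v, h, rfl, rfl⟩)

lemma Du_step23 {a b : PN n} {u v : Row2 n} (h : b.r u v) :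
    (Du a b).r (emb23 u) (emb23 v) :=
  Relation.EqvGen.rel _ _ (Or.inr ⟨u, v, h, rfl, rfl⟩)

lemma Du_le {a b : PN n} {s : Setoid (Row3 n)}
    (h1 : ∀ u v, a.r u v → s (emb12 u) (emb12 v))
    (h2 : ∀ u v, b.r u v → s (emb23 u) (emb23 v)) :
    Du a b ≤ s :=
  Setoid.eqvGen_le (fun x y h => by
    rcases h with ⟨u, v, huv, rfl, rfl⟩ | ⟨u, v, huv, rfl, rfl⟩
    exacts [h1 u v huv, h2 u v huv])

lemma comp_rel {a b : PN n} {x y : Row2 n} :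
    (comp a b).r x y ↔ (Du a b).r (emb13 x) (emb13 y) := Iff.rfl

lemma comp_oneP (a : PN n) : comp a (oneP n) = a := by
  have bridge : ∀ x : Row2 n, (Du a (oneP n)).r (emb13 x) (emb12 x) := by
    rintro (i | q)
    · exact (Du a (oneP n)).refl' _
    · exact (Du a (oneP n)).symm' (Du_step23 (u := Sum.inl q) (v := Sum.inr q) rfl)
  have key : Du a (oneP n) ≤ Setoid.comap (Nf id) a := by
    refine Du_le ?_ ?_
    · intro u v h
      rw [Setoid.comap_rel, Nf_emb12, Nf_emb12]
      exact h
    · rintro (p | p) (q | q) h <;>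
        simp only [Setoid.comap_rel, Nf_emb23_inl, Nf_emb23_inr, id] <;>
        · have : (p : Fin n) = q := h
          rw [this]
  apply Setoid.ext; intro x y
  constructor
  · intro h
    have := key h
    rw [Setoid.comap_rel] at this
    cases x <;> cases y <;> simpa using this
  · intro h
    rw [comp_rel]
    exact (Du a (oneP n)).trans' (bridge x)
      ((Du a (oneP n)).trans' (Du_step12 h) ((Du a (oneP n)).symm' (bridge y)))

end Aux
section CompLemmas
variable {n : ℕ}

lemma comp_permP (a : PN n) (f : Equiv.Perm (Fin n)) :
    comp a (permP f) = Setoid.comap (Sum.map id f) a := by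
  have bridge : ∀ x : Row2 n,
      (Du a (permP f)).r (emb13 x) (emb12 (Sum.map id f x)) := by
    rintro (i | q)
    · exact (Du a (permP f)).refl' _
    · refine (Du a (permP f)).symm'
        (Du_step23 (u := Sum.inl (f q)) (v := Sum.inr q) ?_)
      show Sum.elim id f (Sum.inl (f q)) = Sum.elim id f (Sum.inr q)
      simp
  have key : Du a (permP f) ≤ Setoid.comap (Nf f) a := by
    refine Du_le ?_ ?_
    · intro u v h
      rw [Setoid.comap_rel, Nf_emb12, Nf_emb12]
      exact h
    · rintro (p | p) (q | q) h <;>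
        simp only [Setoid.comap_rel, Nf_emb23_inl, Nf_emb23_inr] <;>
        · first
          | (have : (p : Fin n) = (q : Fin n) := h; rw [this])
          | (have : (p : Fin n) = f q := h; rw [this])
          | (have : f p = (q : Fin n) := h; rw [this])
          | (have : f p = f q := h; rw [this])
  apply Setoid.ext; intro x y
  constructor
  · intro h
    have := key h
    rw [Setoid.comap_rel] at this
    rw [Setoid.comap_rel]
    cases x <;> cases y <;> simpa using this
  · intro h
    rw [Setoid.comap_rel] at h
    rw [comp_rel]
    refine (Du a (permP f)).trans' (bridge x)
      ((Du a (permP f)).trans' (Du_step12 h) ((Du a (permP f)).symm' (bridge y)))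

/-- upper-bound setoid for the cut computation -/
def cutUB (i : Fin n) (a : PN n) : Setoid (Row3 n) where
  r x y := x = y ∨ (x ≠ Sum.inr (Sum.inr i) ∧ y ≠ Sum.inr (Sum.inr i) ∧
    a.r (Nf id x) (Nf id y))
  iseqv := by
    refine ⟨fun x => Or.inl rfl, ?_, ?_⟩
    · rintro x y (rfl | ⟨hx, hy, h⟩)
      · exact Or.inl rfl
      · exact Or.inr ⟨hy, hx, a.symm' h⟩
    · rintro x y z (rfl | ⟨hx, hy, h⟩) h2
      · exact h2
      · rcases h2 with rfl | ⟨hy2, hz, h2⟩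
        · exact Or.inr ⟨hx, hy, h⟩
        · exact Or.inr ⟨hx, hz, a.trans' h h2⟩

lemma comp_Ai (a : PN n) (i : Fin n) : comp a (Ai i) = detach (Sum.inr i) a := by
  have bridge : ∀ x : Row2 n, x ≠ Sum.inr i →
      (Du a (Ai i)).r (emb13 x) (emb12 x) := by
    rintro (p | q) hx
    · exact (Du a (Ai i)).refl' _
    · refine (Du a (Ai i)).symm'
        (Du_step23 (u := Sum.inl q) (v := Sum.inr q) ?_)
      show ((q : Fin n), false) = (q, decide (q = i))
      have : q ≠ i := fun h => hx (by rw [h])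
      simp [this]
  have key : Du a (Ai i) ≤ cutUB i a := by
    refine Du_le ?_ ?_
    · intro u v h
      refine Or.inr ⟨?_, ?_, ?_⟩
      · cases u <;> simp [emb12]
      · cases v <;> simp [emb12]
      · rw [Nf_emb12, Nf_emb12]; exact h
    · rintro (p | p) (q | q) h
      · have : (p : Fin n) = q := by
          have h' : ((p : Fin n), false) = (q, false) := h
          exact (Prod.mk.injEq _ _ _ _ ▸ h').1
        exact Or.inl (by rw [this])
      · have h' : ((p : Fin n), false) = (q, decide (q = i)) := h
        have h1 : (p : Fin n) = q := (Prod.mk.injEq _ _ _ _ ▸ h').1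
        have h2 : (q : Fin n) ≠ i := by
          intro hq
          have := (Prod.mk.injEq _ _ _ _ ▸ h').2
          simp [hq] at this
        refine Or.inr ⟨by simp [emb23], by simp [emb23, h2], ?_⟩
        simp only [Nf_emb23_inl, Nf_emb23_inr, id]
        rw [h1]
      · have h' : ((p : Fin n), decide (p = i)) = (q, false) := h
        have h1 : (p : Fin n) = q := (Prod.mk.injEq _ _ _ _ ▸ h').1
        have h2 : (p : Fin n) ≠ i := by
          intro hq
          have := (Prod.mk.injEq _ _ _ _ ▸ h').2
          simp [hq] at this
        refine Or.inr ⟨by simp [emb23, h2], by simp [emb23], ?_⟩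
        simp only [Nf_emb23_inl, Nf_emb23_inr, id]
        rw [h1]
      · have h' : ((p : Fin n), decide (p = i)) = (q, decide (q = i)) := h
        have h1 : (p : Fin n) = q := (Prod.mk.injEq _ _ _ _ ▸ h').1
        exact Or.inl (by rw [h1])
  apply Setoid.ext; intro x y
  constructor
  · intro h
    have := key h
    rcases this with heq | ⟨hx, hy, h'⟩
    · left
      cases x <;> cases y <;> simp [emb13] at heq ⊢ <;> exact heq
    · right
      refine ⟨?_, ?_, ?_⟩
      · intro hxi; apply hx; rw [hxi]; rfl
      · intro hyi; apply hy; rw [hyi]; rfl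
      · cases x <;> cases y <;> simpa using h'
  · rintro (rfl | ⟨hx, hy, h⟩)
    · exact (comp a (Ai i)).refl' _
    · rw [comp_rel]
      exact (Du a (Ai i)).trans' (bridge x hx)
        ((Du a (Ai i)).trans' (Du_step12 h) ((Du a (Ai i)).symm' (bridge y hy)))

lemma Aij_cases {i j p q : Fin n}
    (h : (if p = j then i else p) = (if q = j then i else q)) :
    p = q ∨ (p = i ∧ q = j) ∨ (p = j ∧ q = i) := by
  by_cases hp : p = j <;> by_cases hq : q = j <;> simp [hp, hq] at h ⊢ <;> tauto

lemma comp_Aij (a : PN n) (i j : Fin n) :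
    comp a (Aij i j) = joinP (Sum.inr i) (Sum.inr j) a := by
  have hAij : ∀ p q : Fin n,
      (if p = j then i else p) = (if q = j then i else q) →
      (joinP (Sum.inr i) (Sum.inr j) a).r (Sum.inr p) (Sum.inr q) := by
    intro p q h
    rcases Aij_cases h with rfl | ⟨rfl, rfl⟩ | ⟨rfl, rfl⟩
    · exact (joinP _ _ a).refl' _
    · exact Or.inr (Or.inl ⟨a.refl' _, a.refl' _⟩)
    · exact Or.inr (Or.inr ⟨a.refl' _, a.refl' _⟩)
  have bridge : ∀ x : Row2 n, (Du a (Aij i j)).r (emb13 x) (emb12 x) := by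
    rintro (p | q)
    · exact (Du a (Aij i j)).refl' _
    · exact (Du a (Aij i j)).symm'
        (Du_step23 (u := Sum.inl q) (v := Sum.inr q) rfl)
  have key : Du a (Aij i j) ≤ Setoid.comap (Nf id) (joinP (Sum.inr i) (Sum.inr j) a) := by
    refine Du_le ?_ ?_
    · intro u v h
      rw [Setoid.comap_rel, Nf_emb12, Nf_emb12]
      exact Or.inl h
    · rintro (p | p) (q | q) h <;>
      · rw [Setoid.comap_rel]
        exact hAij _ _ h
  apply Setoid.ext; intro x y
  constructor
  · intro h
    have := key h
    rw [Setoid.comap_rel] at this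
    cases x <;> cases y <;> simpa using this
  · intro h
    rw [comp_rel]
    have midstep : (Du a (Aij i j)).r (Sum.inr (Sum.inl i)) (Sum.inr (Sum.inl j)) := by
      refine Du_step23 (u := Sum.inl i) (v := Sum.inl j) ?_
      show (if i = j then i else i) = (if j = j then i else j)
      simp
    rcases h with h | ⟨h1, h2⟩ | ⟨h1, h2⟩
    · exact (Du a (Aij i j)).trans' (bridge x)
        ((Du a (Aij i j)).trans' (Du_step12 h) ((Du a (Aij i j)).symm' (bridge y)))
    · refine (Du a (Aij i j)).trans' (bridge x) ((Du a (Aij i j)).trans' (Du_step12 h1)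
        ((Du a (Aij i j)).trans' midstep ((Du a (Aij i j)).trans' (Du_step12 h2)
          ((Du a (Aij i j)).symm' (bridge y)))))
    · refine (Du a (Aij i j)).trans' (bridge x) ((Du a (Aij i j)).trans' (Du_step12 h1)
        ((Du a (Aij i j)).trans' ((Du a (Aij i j)).symm' midstep)
          ((Du a (Aij i j)).trans' (Du_step12 h2)
            ((Du a (Aij i j)).symm' (bridge y)))))

end CompLemmas
section Moves
variable {n : ℕ}

/-- the set of products of generators -/
def Mset (n : ℕ) (hn : 2 ≤ n) : Set (PN n × PN n) :=
  {a | ∃ (hd : PN n × PN n) (tl : List (PN n × PN n)), hd ∈ Gset n hn ∧ (∀ g ∈ tl, g ∈ Gset n hn) ∧ tl.foldl rcomp hd = a}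

lemma Mset_step {hn : 2 ≤ n} {a g : PN n × PN n}
    (ha : a ∈ Mset n hn) (hg : g ∈ Gset n hn) : rcomp a g ∈ Mset n hn := by
  simp only [Mset, Set.mem_setOf_eq] at ha ⊢
  obtain ⟨hd, tl, h1, h2, h3⟩ := ha
  refine ⟨hd, tl ++ [g], h1, ?_, ?_⟩
  · intro x hx
    rcases List.mem_append.1 hx with hx | hx
    · exact h2 x hx
    · rcases List.mem_singleton.1 hx with rfl; exact hg
  · rw [List.foldl_append, h3]; rfl

/-- relabel the bottom row of both components by `f` -/
def permB (f : Equiv.Perm (Fin n)) (a : PN n × PN n) : PN n × PN n :=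
  (Setoid.comap (Sum.map id f) a.1, Setoid.comap (Sum.map id f) a.2)

lemma comap_map_comap (f g : Equiv.Perm (Fin n)) (s : PN n) :
    Setoid.comap (Sum.map id ⇑f) (Setoid.comap (Sum.map id ⇑g) s) =
      Setoid.comap (Sum.map id ⇑(f.trans g)) s := by
  apply Setoid.ext; intro x y
  cases x <;> cases y <;> exact Iff.rfl

lemma comap_map_one (s : PN n) :
    Setoid.comap (Sum.map id ⇑(1 : Equiv.Perm (Fin n))) s = s := by
  apply Setoid.ext; intro x y
  cases x <;> cases y <;> exact Iff.rfl

lemma permB_permB (f g : Equiv.Perm (Fin n)) (a : PN n × PN n) :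
    permB f (permB g a) = permB (f.trans g) a := by
  unfold permB
  rw [comap_map_comap, comap_map_comap]

lemma permB_one (a : PN n × PN n) : permB 1 a = a := by
  unfold permB
  rw [comap_map_one, comap_map_one]

lemma permB_cancel (f : Equiv.Perm (Fin n)) (a : PN n × PN n) :
    permB f⁻¹ (permB f a) = a := by
  rw [permB_permB]
  have : (f⁻¹.trans f) = (1 : Equiv.Perm (Fin n)) := mul_inv_cancel f
  rw [this, permB_one]

lemma rcomp_sig (a : PN n × PN n) (i j : Fin n) :
    rcomp a (sigP i j, sigP i j) = permB (Equiv.swap i j) a := by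
  show (comp a.1 (sigP i j), comp a.2 (sigP i j)) = _
  rw [sigP_eq_permP, comp_permP, comp_permP]
  rfl

lemma mSwapAdj {hn : 2 ≤ n} (k : ℕ) (h : k + 1 < n) {a : PN n × PN n}
    (ha : a ∈ Mset n hn) :
    permB (Equiv.swap ⟨k, by omega⟩ ⟨k + 1, h⟩) a ∈ Mset n hn := by
  have hg : (sigP (⟨k, by omega⟩ : Fin n) ⟨k + 1, h⟩,
      sigP (⟨k, by omega⟩ : Fin n) ⟨k + 1, h⟩) ∈ Gset n hn :=
    Or.inr ⟨k, h, rfl⟩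
  have := Mset_step ha hg
  rwa [rcomp_sig] at this

lemma mSwapNat {hn : 2 ≤ n} (d : ℕ) : ∀ (i : ℕ) (hi : i < n) (hj : i + d < n)
    (a : PN n × PN n), a ∈ Mset n hn →
    permB (Equiv.swap ⟨i, hi⟩ ⟨i + d, hj⟩) a ∈ Mset n hn := by
  induction d with
  | zero =>
    intro i hi hj a ha
    have h0 : (⟨i + 0, hj⟩ : Fin n) = ⟨i, hi⟩ := Fin.ext (by simp)
    rw [h0, Equiv.swap_self,
      show (Equiv.refl (Fin n)) = (1 : Equiv.Perm (Fin n)) from rfl, permB_one]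
    exact ha
  | succ e ih =>
    intro i hi hj a ha
    match e, ih with
    | 0, _ => exact mSwapAdj i hj ha
    | e + 1, ih =>
      have h1 : i + e + 1 < n := by omega
      have h2 : i + e + 2 < n := by omega
      set x : Fin n := ⟨i, hi⟩
      set y : Fin n := ⟨i + e + 1, h1⟩
      set z : Fin n := ⟨i + e + 2, h2⟩
      have hxy : x ≠ y := by simp only [x, y, ne_eq, Fin.mk.injEq]; omega
      have hxz : x ≠ z := by simp only [x, z, ne_eq, Fin.mk.injEq]; omega
      have hyz : y ≠ z := by simp only [y, z, ne_eq, Fin.mk.injEq]; omega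
      have hsx : Equiv.swap y z x = x := Equiv.swap_apply_of_ne_of_ne hxy hxz
      have hsy : Equiv.swap y z y = z := Equiv.swap_apply_left y z
      have hz : (⟨i + (e + 1) + 1, hj⟩ : Fin n) = z := Fin.ext (by simp [z]; omega)
      have key : Equiv.swap x (⟨i + (e + 1) + 1, hj⟩ : Fin n) =
          (Equiv.swap y z).trans ((Equiv.swap x y).trans (Equiv.swap y z)) := by
        rw [hz]
        calc Equiv.swap x z = Equiv.swap (Equiv.swap y z x) (Equiv.swap y z y) := by
              rw [hsx, hsy]
          _ = Equiv.swap y z * Equiv.swap x y * (Equiv.swap y z)⁻¹ :=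
              Equiv.swap_apply_apply (Equiv.swap y z) x y
          _ = (Equiv.swap y z).trans ((Equiv.swap x y).trans (Equiv.swap y z)) := by
              rw [Equiv.swap_inv]; rfl
      rw [show (⟨i + (e + 1 + 1), hj⟩ : Fin n) = ⟨i + (e + 1) + 1, hj⟩ from rfl, key,
        ← permB_permB, ← permB_permB]
      have m1 : permB (Equiv.swap y z) a ∈ Mset n hn := by
        have := mSwapAdj (hn := hn) (i + e + 1) h2 ha
        exact this
      have m2 : permB (Equiv.swap x y) (permB (Equiv.swap y z) a) ∈ Mset n hn := by
        have := ih i hi h1 _ m1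
        exact this
      have := mSwapAdj (hn := hn) (i + e + 1) h2 m2
      exact this

lemma mSwapFin {hn : 2 ≤ n} (i j : Fin n) {a : PN n × PN n} (ha : a ∈ Mset n hn) :
    permB (Equiv.swap i j) a ∈ Mset n hn := by
  rcases le_total i.1 j.1 with hle | hle
  · obtain ⟨d, hd⟩ : ∃ d, j.1 = i.1 + d := ⟨j.1 - i.1, by omega⟩
    have hj : i.1 + d < n := by omega
    have h2 : j = ⟨i.1 + d, hj⟩ := Fin.ext (by simp [hd])
    rw [h2]
    exact mSwapNat d i.1 i.2 hj a ha
  · obtain ⟨d, hd⟩ : ∃ d, i.1 = j.1 + d := ⟨i.1 - j.1, by omega⟩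
    have hi : j.1 + d < n := by omega
    rw [Equiv.swap_comm]
    have h2 : i = ⟨j.1 + d, hi⟩ := Fin.ext (by simp [hd])
    rw [h2]
    exact mSwapNat d j.1 j.2 hi a ha

lemma mPerm {hn : 2 ≤ n} (f : Equiv.Perm (Fin n)) :
    ∀ a ∈ Mset n hn, permB f a ∈ Mset n hn := by
  refine Equiv.Perm.swap_induction_on f ?_ ?_
  · intro a ha; rw [permB_one]; exact ha
  · intro g x y hxy ih a ha
    have h1 : Equiv.swap x y * g = g.trans (Equiv.swap x y) := rfl
    rw [h1, ← permB_permB]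
    exact ih _ (mSwapFin x y ha)

end Moves
section Moves2
variable {n : ℕ}

lemma joinP_rel {c d : Row2 n} {s : PN n} {x y : Row2 n} :
    (joinP c d s).r x y ↔
      (s.r x y ∨ (s.r x c ∧ s.r d y) ∨ (s.r x d ∧ s.r c y)) := Iff.rfl

lemma detach_rel {c : Row2 n} {s : PN n} {x y : Row2 n} :
    (detach c s).r x y ↔ (x = y ∨ (x ≠ c ∧ y ≠ c ∧ s.r x y)) := Iff.rfl

lemma g1_mem (hn : 2 ≤ n) :
    ((Ai ⟨0, by omega⟩, oneP n) : PN n × PN n) ∈ Gset n hn :=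
  Set.mem_union_left _ (Set.mem_insert _ _)

lemma g2_mem (hn : 2 ≤ n) :
    ((Ai ⟨0, by omega⟩, Ai ⟨0, by omega⟩) : PN n × PN n) ∈ Gset n hn :=
  Set.mem_union_left _ (Set.mem_insert_of_mem _ (Set.mem_insert _ _))

lemma g3_mem (hn : 2 ≤ n) :
    ((oneP n, Aij ⟨0, by omega⟩ ⟨1, by omega⟩) : PN n × PN n) ∈ Gset n hn :=
  Set.mem_union_left _
    (Set.mem_insert_of_mem _ (Set.mem_insert_of_mem _ (Set.mem_insert _ _)))

lemma g4_mem (hn : 2 ≤ n) :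
    ((Aij ⟨0, by omega⟩ ⟨1, by omega⟩, Aij ⟨0, by omega⟩ ⟨1, by omega⟩) :
      PN n × PN n) ∈ Gset n hn :=
  Set.mem_union_left _
    (Set.mem_insert_of_mem _ (Set.mem_insert_of_mem _ (Set.mem_insert_of_mem _ rfl)))

lemma map_cancel (f : Equiv.Perm (Fin n)) (x : Row2 n) :
    Sum.map id ⇑f (Sum.map id ⇑f⁻¹ x) = x := by
  rcases x with i | q
  · rfl
  · simp

lemma map_inv_eq_inr_iff (f : Equiv.Perm (Fin n)) (p : Fin n) (x : Row2 n) :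
    Sum.map id ⇑f⁻¹ x = Sum.inr p ↔ x = Sum.inr (f p) := by
  constructor
  · intro h
    rw [← map_cancel f x, h]; simp
  · rintro rfl; simp

lemma map_inv_inj_iff (f : Equiv.Perm (Fin n)) (x y : Row2 n) :
    Sum.map id ⇑f⁻¹ x = Sum.map id ⇑f⁻¹ y ↔ x = y := by
  constructor
  · intro h
    rw [← map_cancel f x, h, map_cancel]
  · rintro rfl; rfl

lemma cut_conj (f : Equiv.Perm (Fin n)) (p : Fin n) (s : PN n) :
    Setoid.comap (Sum.map id ⇑f⁻¹)
        (detach (Sum.inr p) (Setoid.comap (Sum.map id ⇑f) s)) =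
      detach (Sum.inr (f p)) s := by
  apply Setoid.ext; intro x y
  rw [Setoid.comap_rel, detach_rel, detach_rel]
  simp only [Setoid.comap_rel]
  rw [map_cancel f x, map_cancel f y, map_inv_inj_iff, ne_eq, ne_eq,
    map_inv_eq_inr_iff, map_inv_eq_inr_iff]

lemma join_conj (f : Equiv.Perm (Fin n)) (p q : Fin n) (s : PN n) :
    Setoid.comap (Sum.map id ⇑f⁻¹)
        (joinP (Sum.inr p) (Sum.inr q) (Setoid.comap (Sum.map id ⇑f) s)) =
      joinP (Sum.inr (f p)) (Sum.inr (f q)) s := by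
  apply Setoid.ext; intro x y
  rw [Setoid.comap_rel, joinP_rel, joinP_rel]
  simp only [Setoid.comap_rel]
  rw [map_cancel f x, map_cancel f y]
  simp only [Sum.map_inr, Equiv.Perm.coe_inv, Equiv.apply_symm_apply, id]

lemma comap_cancel (f : Equiv.Perm (Fin n)) (s : PN n) :
    Setoid.comap (Sum.map id ⇑f⁻¹) (Setoid.comap (Sum.map id ⇑f) s) = s := by
  rw [comap_map_comap]
  have h1 : (f⁻¹.trans f) = (1 : Equiv.Perm (Fin n)) := mul_inv_cancel f
  rw [h1, comap_map_one]

lemma exists_perm01 (hn : 2 ≤ n) {i j : Fin n} (hij : i ≠ j) :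
    ∃ f : Equiv.Perm (Fin n), f ⟨0, by omega⟩ = i ∧ f ⟨1, by omega⟩ = j := by
  have h01 : (⟨0, by omega⟩ : Fin n) ≠ ⟨1, by omega⟩ := by
    simp [Fin.ext_iff]
  set z0 : Fin n := ⟨0, by omega⟩ with hz0
  set z1 : Fin n := ⟨1, by omega⟩ with hz1
  set τ : Equiv.Perm (Fin n) := Equiv.swap z0 i with hτ
  have hτ1 : τ z1 ≠ i := by
    rcases eq_or_ne z1 i with h | h
    · rw [hτ, h, Equiv.swap_apply_right]
      rw [h] at h01
      exact h01
    · rw [hτ, Equiv.swap_apply_of_ne_of_ne (Ne.symm h01) h]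
      exact h
  refine ⟨τ.trans (Equiv.swap (τ z1) j), ?_, ?_⟩
  · simp only [Equiv.trans_apply]
    rw [show τ z0 = i from Equiv.swap_apply_left _ _]
    exact Equiv.swap_apply_of_ne_of_ne (Ne.symm hτ1) hij
  · simp only [Equiv.trans_apply]
    exact Equiv.swap_apply_left _ _

lemma mCutFine {hn : 2 ≤ n} (i : Fin n) {a : PN n × PN n} (ha : a ∈ Mset n hn) :
    ((detach (Sum.inr i) a.1, a.2) : PN n × PN n) ∈ Mset n hn := by
  set z0 : Fin n := ⟨0, by omega⟩
  set f : Equiv.Perm (Fin n) := Equiv.swap z0 i with hf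
  have h1 := mPerm (hn := hn) f a ha
  have h2 := Mset_step h1 (g1_mem hn)
  have h3 := mPerm (hn := hn) f⁻¹ _ h2
  have e : permB f⁻¹ (rcomp (permB f a) (Ai ⟨0, by omega⟩, oneP n)) =
      (detach (Sum.inr i) a.1, a.2) := by
    have e1 : rcomp (permB f a) (Ai ⟨0, by omega⟩, oneP n) =
        (detach (Sum.inr z0) (Setoid.comap (Sum.map id ⇑f) a.1),
         Setoid.comap (Sum.map id ⇑f) a.2) := by
      show (comp _ (Ai z0), comp _ (oneP n)) = _
      rw [comp_Ai, comp_oneP]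
      rfl
    rw [e1]
    show (Setoid.comap (Sum.map id ⇑f⁻¹) _, Setoid.comap (Sum.map id ⇑f⁻¹) _) = _
    rw [cut_conj, comap_cancel]
    rw [show f z0 = i from Equiv.swap_apply_left _ _]
  rw [e] at h3
  exact h3

lemma mCutBoth {hn : 2 ≤ n} (i : Fin n) {a : PN n × PN n} (ha : a ∈ Mset n hn) :
    ((detach (Sum.inr i) a.1, detach (Sum.inr i) a.2) : PN n × PN n) ∈ Mset n hn := by
  set z0 : Fin n := ⟨0, by omega⟩
  set f : Equiv.Perm (Fin n) := Equiv.swap z0 i with hf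
  have h1 := mPerm (hn := hn) f a ha
  have h2 := Mset_step h1 (g2_mem hn)
  have h3 := mPerm (hn := hn) f⁻¹ _ h2
  have e : permB f⁻¹ (rcomp (permB f a) (Ai ⟨0, by omega⟩, Ai ⟨0, by omega⟩)) =
      (detach (Sum.inr i) a.1, detach (Sum.inr i) a.2) := by
    have e1 : rcomp (permB f a) (Ai ⟨0, by omega⟩, Ai ⟨0, by omega⟩) =
        (detach (Sum.inr z0) (Setoid.comap (Sum.map id ⇑f) a.1),
         detach (Sum.inr z0) (Setoid.comap (Sum.map id ⇑f) a.2)) := by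
      show (comp _ (Ai z0), comp _ (Ai z0)) = _
      rw [comp_Ai, comp_Ai]
      rfl
    rw [e1]
    show (Setoid.comap (Sum.map id ⇑f⁻¹) _, Setoid.comap (Sum.map id ⇑f⁻¹) _) = _
    rw [cut_conj, cut_conj]
    rw [show f z0 = i from Equiv.swap_apply_left _ _]
  rw [e] at h3
  exact h3

lemma mJoinCoarse {hn : 2 ≤ n} {i j : Fin n} (hij : i ≠ j) {a : PN n × PN n}
    (ha : a ∈ Mset n hn) :
    ((a.1, joinP (Sum.inr i) (Sum.inr j) a.2) : PN n × PN n) ∈ Mset n hn := by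
  obtain ⟨f, hf0, hf1⟩ := exists_perm01 hn hij
  have h1 := mPerm (hn := hn) f a ha
  have h2 := Mset_step h1 (g3_mem hn)
  have h3 := mPerm (hn := hn) f⁻¹ _ h2
  have e : permB f⁻¹ (rcomp (permB f a) (oneP n, Aij ⟨0, by omega⟩ ⟨1, by omega⟩)) =
      (a.1, joinP (Sum.inr i) (Sum.inr j) a.2) := by
    have e1 : rcomp (permB f a) (oneP n, Aij ⟨0, by omega⟩ ⟨1, by omega⟩) =
        (Setoid.comap (Sum.map id ⇑f) a.1,
         joinP (Sum.inr ⟨0, by omega⟩) (Sum.inr ⟨1, by omega⟩)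
           (Setoid.comap (Sum.map id ⇑f) a.2)) := by
      show (comp _ (oneP n), comp _ (Aij _ _)) = _
      rw [comp_oneP, comp_Aij]
      rfl
    rw [e1]
    show (Setoid.comap (Sum.map id ⇑f⁻¹) _, Setoid.comap (Sum.map id ⇑f⁻¹) _) = _
    rw [comap_cancel, join_conj, hf0, hf1]
  rw [e] at h3
  exact h3

lemma mJoinBoth {hn : 2 ≤ n} {i j : Fin n} (hij : i ≠ j) {a : PN n × PN n}
    (ha : a ∈ Mset n hn) :
    ((joinP (Sum.inr i) (Sum.inr j) a.1, joinP (Sum.inr i) (Sum.inr j) a.2) :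
      PN n × PN n) ∈ Mset n hn := by
  obtain ⟨f, hf0, hf1⟩ := exists_perm01 hn hij
  have h1 := mPerm (hn := hn) f a ha
  have h2 := Mset_step h1 (g4_mem hn)
  have h3 := mPerm (hn := hn) f⁻¹ _ h2
  have e : permB f⁻¹ (rcomp (permB f a)
        (Aij ⟨0, by omega⟩ ⟨1, by omega⟩, Aij ⟨0, by omega⟩ ⟨1, by omega⟩)) =
      (joinP (Sum.inr i) (Sum.inr j) a.1, joinP (Sum.inr i) (Sum.inr j) a.2) := by
    have e1 : rcomp (permB f a)
          (Aij ⟨0, by omega⟩ ⟨1, by omega⟩, Aij ⟨0, by omega⟩ ⟨1, by omega⟩) =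
        (joinP (Sum.inr ⟨0, by omega⟩) (Sum.inr ⟨1, by omega⟩)
           (Setoid.comap (Sum.map id ⇑f) a.1),
         joinP (Sum.inr ⟨0, by omega⟩) (Sum.inr ⟨1, by omega⟩)
           (Setoid.comap (Sum.map id ⇑f) a.2)) := by
      show (comp _ (Aij _ _), comp _ (Aij _ _)) = _
      rw [comp_Aij, comp_Aij]
      rfl
    rw [e1]
    show (Setoid.comap (Sum.map id ⇑f⁻¹) _, Setoid.comap (Sum.map id ⇑f⁻¹) _) = _
    rw [join_conj, join_conj, hf0, hf1]
  rw [e] at h3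
  exact h3

lemma mOne {hn : 2 ≤ n} : ((oneP n, oneP n) : PN n × PN n) ∈ Mset n hn := by
  have hz : (0 : ℕ) + 1 < n := by omega
  have hg : (sigP (⟨0, by omega⟩ : Fin n) ⟨1, hz⟩,
      sigP (⟨0, by omega⟩ : Fin n) ⟨1, hz⟩) ∈ Gset n hn := Or.inr ⟨0, hz, rfl⟩
  have h0 : (sigP (⟨0, by omega⟩ : Fin n) ⟨1, hz⟩,
      sigP (⟨0, by omega⟩ : Fin n) ⟨1, hz⟩) ∈ Mset n hn := ⟨_, [], hg, by simp, rfl⟩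
  have h1 := Mset_step h0 hg
  rw [rcomp_sig] at h1
  have e : permB (Equiv.swap (⟨0, by omega⟩ : Fin n) ⟨1, hz⟩)
      (sigP (⟨0, by omega⟩ : Fin n) ⟨1, hz⟩, sigP (⟨0, by omega⟩ : Fin n) ⟨1, hz⟩) =
      (oneP n, oneP n) := by
    unfold permB
    rw [sigP_eq_permP]
    have key : Setoid.comap (Sum.map id ⇑(Equiv.swap (⟨0, by omega⟩ : Fin n) ⟨1, hz⟩))
        (permP (Equiv.swap (⟨0, by omega⟩ : Fin n) ⟨1, hz⟩)) = oneP n := by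
      apply Setoid.ext; intro x y
      rcases x with p | p <;> rcases y with q | q <;>
      · show Sum.elim id ⇑(Equiv.swap _ _) _ = Sum.elim id ⇑(Equiv.swap _ _) _ ↔
          Sum.elim id id _ = Sum.elim id id _
        simp [Sum.map]
    rw [key]
  rw [e] at h1
  exact h1

end Moves2
section Mirror
variable {n : ℕ}

/-- number of related pairs -/
noncomputable def pc (s : PN n) : ℕ :=
  ((Finset.univ : Finset (Row2 n × Row2 n)).filter (fun p => s.r p.1 p.2)).card

/-- number of related top pairs -/
noncomputable def pcT (s : PN n) : ℕ :=
  ((Finset.univ : Finset (Fin n × Fin n)).filter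
    (fun p => s.r (Sum.inl p.1) (Sum.inl p.2))).card

lemma detach_le (c : Row2 n) (s : PN n) : detach c s ≤ s := by
  rintro x y (rfl | ⟨_, _, h⟩)
  · exact s.refl' x
  · exact h

lemma pc_detach_le (c : Row2 n) (s : PN n) : pc (detach c s) ≤ pc s := by
  apply Finset.card_le_card
  intro p hp
  rw [Finset.mem_filter] at hp ⊢
  exact ⟨hp.1, detach_le c s hp.2⟩

lemma pc_detach_lt {c d : Row2 n} {s : PN n} (h : s.r c d) (hne : c ≠ d) :
    pc (detach c s) < pc s := by
  apply Finset.card_lt_card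
  rw [Finset.ssubset_iff_of_subset]
  · refine ⟨(c, d), ?_, ?_⟩
    · rw [Finset.mem_filter]; exact ⟨Finset.mem_univ _, h⟩
    · rw [Finset.mem_filter]
      rintro ⟨-, (h' | ⟨hc, -, -⟩)⟩
      · exact hne h'
      · exact hc rfl
  · intro p hp
    rw [Finset.mem_filter] at hp ⊢
    exact ⟨hp.1, detach_le c s hp.2⟩

lemma pcT_detach_le (i : Fin n) (s : PN n) : pcT (detach (Sum.inl i) s) ≤ pcT s := by
  apply Finset.card_le_card
  intro p hp
  rw [Finset.mem_filter] at hp ⊢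
  exact ⟨hp.1, detach_le _ s hp.2⟩

lemma pcT_detach_lt {i j : Fin n} {s : PN n} (h : s.r (Sum.inl i) (Sum.inl j))
    (hne : i ≠ j) : pcT (detach (Sum.inl i) s) < pcT s := by
  apply Finset.card_lt_card
  rw [Finset.ssubset_iff_of_subset]
  · refine ⟨(i, j), ?_, ?_⟩
    · rw [Finset.mem_filter]; exact ⟨Finset.mem_univ _, h⟩
    · rw [Finset.mem_filter]
      rintro ⟨-, (h' | ⟨hc, -, -⟩)⟩
      · exact hne (Sum.inl.injEq _ _ ▸ h')
      · exact hc rfl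
  · intro p hp
    rw [Finset.mem_filter] at hp ⊢
    exact ⟨hp.1, detach_le _ s hp.2⟩

lemma pc_pos (hn : 2 ≤ n) (s : PN n) : 0 < pc s := by
  rw [pc, Finset.card_pos]
  refine ⟨(Sum.inl ⟨0, by omega⟩, Sum.inl ⟨0, by omega⟩), ?_⟩
  rw [Finset.mem_filter]
  exact ⟨Finset.mem_univ _, s.refl' _⟩

lemma joinP_of_rel {c d : Row2 n} {s : PN n} (h : s.r c d) : joinP c d s = s := by
  apply Setoid.ext; intro x y
  rw [joinP_rel]
  constructor
  · rintro (h' | ⟨h1, h2⟩ | ⟨h1, h2⟩)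
    · exact h'
    · exact s.trans' h1 (s.trans' h h2)
    · exact s.trans' h1 (s.trans' (s.symm' h) h2)
  · exact fun h' => Or.inl h'

lemma joinP_detach {c d : Row2 n} {s : PN n} (hcd : s.r c d) (hne : c ≠ d) :
    joinP c d (detach c s) = s := by
  apply Setoid.ext; intro x y
  rw [joinP_rel, detach_rel, detach_rel, detach_rel, detach_rel, detach_rel]
  constructor
  · rintro ((rfl | ⟨-, -, h⟩) | ⟨h1, h2⟩ | ⟨h1, h2⟩)
    · exact s.refl' x
    · exact h
    · -- h1 : x = c ∨ ..., but second disjunct has c ≠ c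
      have hx : x = c := by
        rcases h1 with h1 | ⟨-, hc, -⟩
        · exact h1
        · exact absurd rfl hc
      rcases h2 with h2 | ⟨-, -, h2⟩
      · rw [hx, ← h2]; exact hcd
      · rw [hx]; exact s.trans' hcd h2
    · have hy : y = c := by
        rcases h2 with h2 | ⟨hc, -, -⟩
        · exact h2.symm
        · exact absurd rfl hc
      rcases h1 with h1 | ⟨-, -, h1⟩
      · rw [hy, h1]; exact s.symm' hcd
      · rw [hy]; exact s.trans' h1 (s.symm' hcd)
  · intro h
    by_cases hx : x = c <;> by_cases hy : y = c
    · exact Or.inl (Or.inl (hx.trans hy.symm))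
    · refine Or.inr (Or.inl ⟨Or.inl hx, Or.inr ⟨?_, ?_, ?_⟩⟩)
      · exact fun h' => hne h'.symm
      · exact hy
      · exact s.trans' (s.symm' hcd) (by rw [← hx]; exact h)
    · refine Or.inr (Or.inr ⟨Or.inr ⟨hx, fun h' => hne h'.symm, ?_⟩, Or.inl hy.symm⟩)
      · exact s.trans' (by rw [← hy]; exact h) hcd
    · exact Or.inl (Or.inr ⟨hx, hy, h⟩)

/-- mirror of the top structure of `s` -/
def mir (s : PN n) : PN n :=
  Setoid.comap (fun x : Row2 n => (Sum.inl (proj x) : Row2 n)) s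

lemma mir_rel {s : PN n} {x y : Row2 n} :
    (mir s).r x y ↔ s.r (Sum.inl (proj x)) (Sum.inl (proj y)) := Iff.rfl

lemma mir_join (i j : Fin n) (s : PN n) :
    mir (joinP (Sum.inl i) (Sum.inl j) s) = joinP (Sum.inr i) (Sum.inr j) (mir s) := by
  apply Setoid.ext; intro x y
  exact Iff.rfl

lemma mir_one {s : PN n} (hdisc : ∀ p q : Fin n, s.r (Sum.inl p) (Sum.inl q) → p = q) :
    mir s = oneP n := by
  apply Setoid.ext; intro x y
  rw [mir_rel]
  constructor
  · intro h
    have := hdisc _ _ h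
    show Sum.elim id id x = Sum.elim id id y
    cases x <;> cases y <;> simpa [proj] using this
  · intro h
    have : proj x = proj y := by
      change Sum.elim id id x = Sum.elim id id y at h
      cases x <;> cases y <;> simpa [proj] using h
    rw [this]

lemma mMirror {hn : 2 ≤ n} : ∀ (N : ℕ) (a1 a2 : PN n),
    (∀ p q : Fin n, a1.r (Sum.inl p) (Sum.inl q) → a2.r (Sum.inl p) (Sum.inl q)) →
    pcT a1 + pcT a2 ≤ N → ((mir a1, mir a2) : PN n × PN n) ∈ Mset n hn := by
  intro N
  induction N with
  | zero =>
    intro a1 a2 _ hle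
    exfalso
    have h1 : 0 < pcT a1 := by
      rw [pcT, Finset.card_pos]
      refine ⟨(⟨0, by omega⟩, ⟨0, by omega⟩), ?_⟩
      rw [Finset.mem_filter]
      exact ⟨Finset.mem_univ _, a1.refl' _⟩
    omega
  | succ N ih =>
    intro a1 a2 hTop hle
    by_cases hx1 : ∃ i j : Fin n, i ≠ j ∧ a1.r (Sum.inl i) (Sum.inl j)
    · obtain ⟨i, j, hij, hrel⟩ := hx1
      have hne : (Sum.inl i : Row2 n) ≠ Sum.inl j := by
        simp [hij]
      have hm : pcT (detach (Sum.inl i) a1) + pcT a2 ≤ N := by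
        have := pcT_detach_lt hrel hij
        omega
      have hTop' : ∀ p q : Fin n, (detach (Sum.inl i) a1).r (Sum.inl p) (Sum.inl q) →
          a2.r (Sum.inl p) (Sum.inl q) := by
        intro p q h
        exact hTop p q (detach_le _ _ h)
      have hmem := ih (detach (Sum.inl i) a1) a2 hTop' hm
      have hmem2 := mJoinBoth (hn := hn) hij hmem
      have e1 : joinP (Sum.inr i) (Sum.inr j) (mir (detach (Sum.inl i) a1)) = mir a1 := by
        rw [← mir_join]
        congr 1
        exact joinP_detach hrel hne
      have e2 : joinP (Sum.inr i) (Sum.inr j) (mir a2) = mir a2 := by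
        apply joinP_of_rel
        rw [mir_rel]
        exact hTop _ _ hrel
      rw [show ((mir (detach (Sum.inl i) a1), mir a2) : PN n × PN n).1 = mir (detach (Sum.inl i) a1) from rfl,
        show ((mir (detach (Sum.inl i) a1), mir a2) : PN n × PN n).2 = mir a2 from rfl,
        e1, e2] at hmem2
      exact hmem2
    · by_cases hx2 : ∃ i j : Fin n, i ≠ j ∧ a2.r (Sum.inl i) (Sum.inl j)
      · obtain ⟨i, j, hij, hrel⟩ := hx2
        have hne : (Sum.inl i : Row2 n) ≠ Sum.inl j := by
          simp [hij]
        have hm : pcT a1 + pcT (detach (Sum.inl i) a2) ≤ N := by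
          have := pcT_detach_lt hrel hij
          omega
        have hTop' : ∀ p q : Fin n, a1.r (Sum.inl p) (Sum.inl q) →
            (detach (Sum.inl i) a2).r (Sum.inl p) (Sum.inl q) := by
          intro p q h
          have hpq : p = q := by
            by_contra hne'
            exact hx1 ⟨p, q, hne', h⟩
          rw [hpq]
        have hmem := ih a1 (detach (Sum.inl i) a2) hTop' hm
        have hmem2 := mJoinCoarse (hn := hn) hij hmem
        have e2 : joinP (Sum.inr i) (Sum.inr j) (mir (detach (Sum.inl i) a2)) = mir a2 := by
          rw [← mir_join]
          congr 1
          exact joinP_detach hrel hne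
        rw [show ((mir a1, mir (detach (Sum.inl i) a2)) : PN n × PN n).1 = mir a1 from rfl,
          show ((mir a1, mir (detach (Sum.inl i) a2)) : PN n × PN n).2 = mir (detach (Sum.inl i) a2) from rfl,
          e2] at hmem2
        exact hmem2
      · have hd1 : ∀ p q : Fin n, a1.r (Sum.inl p) (Sum.inl q) → p = q := by
          intro p q h
          by_contra hne'
          exact hx1 ⟨p, q, hne', h⟩
        have hd2 : ∀ p q : Fin n, a2.r (Sum.inl p) (Sum.inl q) → p = q := by
          intro p q h
          by_contra hne'
          exact hx2 ⟨p, q, hne', h⟩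
        rw [mir_one hd1, mir_one hd2]
        exact mOne

end Mirror
section Cuts
variable {n : ℕ}

/-- cut a set of bottom points -/
def cutP (S : Set (Fin n)) (s : PN n) : PN n where
  r x y := x = y ∨ ((∀ p ∈ S, x ≠ Sum.inr p) ∧ (∀ p ∈ S, y ≠ Sum.inr p) ∧ s.r x y)
  iseqv := by
    refine ⟨fun x => Or.inl rfl, ?_, ?_⟩
    · rintro x y (rfl | ⟨hx, hy, h⟩)
      · exact Or.inl rfl
      · exact Or.inr ⟨hy, hx, s.symm' h⟩
    · rintro x y z (rfl | ⟨hx, hy, h⟩) h2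
      · exact h2
      · rcases h2 with rfl | ⟨hy2, hz, h2⟩
        · exact Or.inr ⟨hx, hy, h⟩
        · exact Or.inr ⟨hx, hz, s.trans' h h2⟩

lemma cutP_rel {S : Set (Fin n)} {s : PN n} {x y : Row2 n} :
    (cutP S s).r x y ↔ (x = y ∨
      ((∀ p ∈ S, x ≠ Sum.inr p) ∧ (∀ p ∈ S, y ≠ Sum.inr p) ∧ s.r x y)) := Iff.rfl

lemma cutP_empty_like {S : Set (Fin n)} (hS : ∀ p, p ∉ S) (s : PN n) :
    cutP S s = s := by
  apply Setoid.ext; intro x y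
  rw [cutP_rel]
  constructor
  · rintro (rfl | ⟨-, -, h⟩)
    · exact s.refl' x
    · exact h
  · intro h
    exact Or.inr ⟨fun p hp => absurd hp (hS p), fun p hp => absurd hp (hS p), h⟩

lemma detach_cutP (p : Fin n) (S : Set (Fin n)) (s : PN n) :
    detach (Sum.inr p) (cutP S s) = cutP (insert p S) s := by
  apply Setoid.ext; intro x y
  rw [detach_rel, cutP_rel, cutP_rel]
  constructor
  · rintro (rfl | ⟨hx, hy, rfl | ⟨hxS, hyS, h⟩⟩)
    · exact Or.inl rfl
    · exact Or.inl rfl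
    · refine Or.inr ⟨?_, ?_, h⟩
      · intro r hr
        rcases Set.mem_insert_iff.1 hr with rfl | hr
        · exact hx
        · exact hxS r hr
      · intro r hr
        rcases Set.mem_insert_iff.1 hr with rfl | hr
        · exact hy
        · exact hyS r hr
  · rintro (rfl | ⟨hx, hy, h⟩)
    · exact Or.inl rfl
    · refine Or.inr ⟨hx p (Set.mem_insert _ _), hy p (Set.mem_insert _ _),
        Or.inr ⟨fun r hr => hx r (Set.mem_insert_of_mem _ hr),
          fun r hr => hy r (Set.mem_insert_of_mem _ hr), h⟩⟩

lemma mCutList {hn : 2 ≤ n} (g : Fin n → Fin n) (fa ca : Fin n → Prop)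
    (hfc : ∀ q, fa q → ca q) (m1 m2 : PN n) :
    ∀ l : List (Fin n), ((m1, m2) : PN n × PN n) ∈ Mset n hn →
      ((cutP {x | ∃ q ∈ l, g q = x ∧ ¬ fa q} m1,
        cutP {x | ∃ q ∈ l, g q = x ∧ ¬ ca q} m2) : PN n × PN n) ∈ Mset n hn := by
  intro l
  induction l with
  | nil =>
    intro hm
    rw [cutP_empty_like (by simp) m1, cutP_empty_like (by simp) m2]
    exact hm
  | cons q l ih =>
    intro hm
    have hmem := ih hm
    by_cases hfa : fa q
    · have hca := hfc q hfa
      have e1 : {x | ∃ q' ∈ (q :: l), g q' = x ∧ ¬ fa q'} =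
          {x | ∃ q' ∈ l, g q' = x ∧ ¬ fa q'} := by
        ext x
        simp only [List.mem_cons, Set.mem_setOf_eq]
        constructor
        · rintro ⟨q', (rfl | hq'), hgx, hnfa⟩
          · exact absurd hfa hnfa
          · exact ⟨q', hq', hgx, hnfa⟩
        · rintro ⟨q', hq', hgx, hnfa⟩
          exact ⟨q', Or.inr hq', hgx, hnfa⟩
      have e2 : {x | ∃ q' ∈ (q :: l), g q' = x ∧ ¬ ca q'} =
          {x | ∃ q' ∈ l, g q' = x ∧ ¬ ca q'} := by
        ext x
        simp only [List.mem_cons, Set.mem_setOf_eq]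
        constructor
        · rintro ⟨q', (rfl | hq'), hgx, hnca⟩
          · exact absurd hca hnca
          · exact ⟨q', hq', hgx, hnca⟩
        · rintro ⟨q', hq', hgx, hnca⟩
          exact ⟨q', Or.inr hq', hgx, hnca⟩
      rw [e1, e2]
      exact hmem
    · have e1 : {x | ∃ q' ∈ (q :: l), g q' = x ∧ ¬ fa q'} =
          insert (g q) {x | ∃ q' ∈ l, g q' = x ∧ ¬ fa q'} := by
        ext x
        simp only [List.mem_cons, Set.mem_setOf_eq, Set.mem_insert_iff]
        constructor
        · rintro ⟨q', (rfl | hq'), hgx, hnfa⟩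
          · exact Or.inl hgx.symm
          · exact Or.inr ⟨q', hq', hgx, hnfa⟩
        · rintro (rfl | ⟨q', hq', hgx, hnfa⟩)
          · exact ⟨q, Or.inl rfl, rfl, hfa⟩
          · exact ⟨q', Or.inr hq', hgx, hnfa⟩
      by_cases hca : ca q
      · have e2 : {x | ∃ q' ∈ (q :: l), g q' = x ∧ ¬ ca q'} =
            {x | ∃ q' ∈ l, g q' = x ∧ ¬ ca q'} := by
          ext x
          simp only [List.mem_cons, Set.mem_setOf_eq]
          constructor
          · rintro ⟨q', (rfl | hq'), hgx, hnca⟩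
            · exact absurd hca hnca
            · exact ⟨q', hq', hgx, hnca⟩
          · rintro ⟨q', hq', hgx, hnca⟩
            exact ⟨q', Or.inr hq', hgx, hnca⟩
        rw [e1, e2, ← detach_cutP]
        exact mCutFine (hn := hn) (g q) hmem
      · have e2 : {x | ∃ q' ∈ (q :: l), g q' = x ∧ ¬ ca q'} =
            insert (g q) {x | ∃ q' ∈ l, g q' = x ∧ ¬ ca q'} := by
          ext x
          simp only [List.mem_cons, Set.mem_setOf_eq, Set.mem_insert_iff]
          constructor
          · rintro ⟨q', (rfl | hq'), hgx, hnca⟩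
            · exact Or.inl hgx.symm
            · exact Or.inr ⟨q', hq', hgx, hnca⟩
          · rintro (rfl | ⟨q', hq', hgx, hnca⟩)
            · exact ⟨q, Or.inl rfl, rfl, hca⟩
            · exact ⟨q', Or.inr hq', hgx, hnca⟩
        rw [e1, e2, ← detach_cutP, ← detach_cutP]
        exact mCutBoth (hn := hn) (g q) hmem

/-- the key equality: cutting the mirror and relabelling gives back `a` -/
lemma final_eq (a : PN n) (π : Equiv.Perm (Fin n)) (att : Fin n → Prop)
    (hatt : ∀ q, att q → a.r (Sum.inl (π q)) (Sum.inr q))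
    (hbot : ∀ p q : Fin n, p ≠ q → a.r (Sum.inr p) (Sum.inr q) → att p ∧ att q)
    (hattr : ∀ q i, a.r (Sum.inl i) (Sum.inr q) → att q) :
    Setoid.comap (Sum.map id ⇑π) (cutP {x | ∃ q, π q = x ∧ ¬ att q} (mir a)) = a := by
  have hS : ∀ q : Fin n,
      (∀ p ∈ {x | ∃ q', π q' = x ∧ ¬ att q'}, (Sum.inr (π q) : Row2 n) ≠ Sum.inr p)
        ↔ att q := by
    intro q
    constructor
    · intro h
      by_contra hnatt
      exact h (π q) ⟨q, rfl, hnatt⟩ rfl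
    · intro h p hp heq
      obtain ⟨q', hq', hnatt⟩ := hp
      have : p = π q := (Sum.inr_injective heq).symm
      rw [this] at hq'
      have : q' = q := π.injective hq'
      rw [this] at hnatt
      exact hnatt h
  have hT : ∀ i : Fin n,
      (∀ p ∈ {x | ∃ q', π q' = x ∧ ¬ att q'}, (Sum.inl i : Row2 n) ≠ Sum.inr p) := by
    intro i p _ h
    exact absurd h (by simp)
  apply Setoid.ext; intro x y
  rw [Setoid.comap_rel, cutP_rel]
  rcases x with i | q <;> rcases y with i' | q'
  · -- inl inl
    show (Sum.inl i : Row2 n) = Sum.inl i' ∨ _ ↔ a.r (Sum.inl i) (Sum.inl i')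
    constructor
    · rintro (h | ⟨-, -, h⟩)
      · rw [show i = i' from Sum.inl.injEq _ _ ▸ h]
      · exact h
    · intro h
      exact Or.inr ⟨hT i, hT i', h⟩
  · -- inl inr
    show (Sum.inl i : Row2 n) = Sum.inr (π q') ∨ _ ↔ a.r (Sum.inl i) (Sum.inr q')
    constructor
    · rintro (h | ⟨-, hq, h⟩)
      · exact absurd h (by simp)
      · have hatt' : att q' := (hS q').1 hq
        exact a.trans' h (hatt q' hatt')
    · intro h
      have hatt' : att q' := hattr q' i h
      refine Or.inr ⟨hT i, (hS q').2 hatt', ?_⟩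
      exact a.trans' h (a.symm' (hatt q' hatt'))
  · -- inr inl
    show (Sum.inr (π q) : Row2 n) = Sum.inl i' ∨ _ ↔ a.r (Sum.inr q) (Sum.inl i')
    constructor
    · rintro (h | ⟨hq, -, h⟩)
      · exact absurd h (by simp)
      · have hatt' : att q := (hS q).1 hq
        exact a.trans' (a.symm' (hatt q hatt')) h
    · intro h
      have hatt' : att q := hattr q i' (a.symm' h)
      refine Or.inr ⟨(hS q).2 hatt', hT i', ?_⟩
      exact a.trans' (hatt q hatt') h
  · -- inr inr
    show (Sum.inr (π q) : Row2 n) = Sum.inr (π q') ∨ _ ↔ a.r (Sum.inr q) (Sum.inr q')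
    constructor
    · rintro (h | ⟨hq, hq', h⟩)
      · have : q = q' := π.injective (Sum.inr.injEq _ _ ▸ h)
        rw [this]
      · have h1 : att q := (hS q).1 hq
        have h2 : att q' := (hS q').1 hq'
        exact a.trans' (a.symm' (hatt q h1)) (a.trans' h (hatt q' h2))
    · intro h
      rcases eq_or_ne q q' with rfl | hne
      · exact Or.inl rfl
      · obtain ⟨h1, h2⟩ := hbot q q' hne h
        refine Or.inr ⟨(hS q).2 h1, (hS q').2 h2, ?_⟩
        exact a.trans' (hatt q h1) (a.trans' h (a.symm' (hatt q' h2)))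

end Cuts
section Main
variable {n : ℕ}

/-- `q` is attached to the top row in `a` -/
def attP (a : PN n) (q : Fin n) : Prop := ∃ i : Fin n, a.r (Sum.inl i) (Sum.inr q)

/-- representative chooser -/
noncomputable def repP (a1 a2 : PN n) (q : {q : Fin n // attP a2 q}) : Fin n :=
  if h : attP a1 q.1 then Classical.choose h else Classical.choose q.2

lemma repP_spec1 {a1 a2 : PN n} (q : {q : Fin n // attP a2 q}) (h : attP a1 q.1) :
    a1.r (Sum.inl (repP a1 a2 q)) (Sum.inr q.1) := by
  rw [repP, dif_pos h]
  exact Classical.choose_spec h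

lemma repP_spec2 {a1 a2 : PN n} (h12 : a1 ≤ a2) (q : {q : Fin n // attP a2 q}) :
    a2.r (Sum.inl (repP a1 a2 q)) (Sum.inr q.1) := by
  by_cases h : attP a1 q.1
  · exact h12 (repP_spec1 q h)
  · rw [repP, dif_neg h]
    exact Classical.choose_spec q.2

lemma case3 {hn : 2 ≤ n} (a1 a2 : PN n) (h12 : a1 ≤ a2)
    (hno2 : ∀ p q : Fin n, a1.r (Sum.inr p) (Sum.inr q) → p = q)
    (hno1 : ∀ p q : Fin n, a2.r (Sum.inr p) (Sum.inr q) →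
      (∀ z, a1.r (Sum.inr p) z → z = Sum.inr p) → p = q) :
    ((a1, a2) : PN n × PN n) ∈ Mset n hn := by
  have hfc : ∀ q, attP a1 q → attP a2 q := by
    rintro q ⟨i, h⟩; exact ⟨i, h12 h⟩
  have htriv : ∀ q : Fin n, ¬ attP a1 q →
      (∀ z, a1.r (Sum.inr q) z → z = Sum.inr q) := by
    intro q hq z hz
    rcases z with i | p
    · exact absurd ⟨i, a1.symm' hz⟩ hq
    · exact congrArg Sum.inr (hno2 q p hz).symm
  have hρinj : Function.Injective (repP a1 a2) := by
    intro q1 q2 heq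
    have r2 := repP_spec2 h12 q2
    rw [← heq] at r2
    have hrel : a2.r (Sum.inr q1.1) (Sum.inr q2.1) :=
      a2.trans' (a2.symm' (repP_spec2 h12 q1)) r2
    by_cases h1 : attP a1 q1.1
    · by_cases h2 : attP a1 q2.1
      · have r2' := repP_spec1 q2 h2
        rw [← heq] at r2'
        have hrel1 : a1.r (Sum.inr q1.1) (Sum.inr q2.1) :=
          a1.trans' (a1.symm' (repP_spec1 q1 h1)) r2'
        exact Subtype.ext (hno2 _ _ hrel1)
      · exact Subtype.ext ((hno1 _ _ (a2.symm' hrel) (htriv _ h2)).symm)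
    · exact Subtype.ext (hno1 _ _ hrel (htriv _ h1))
  let e := Equiv.ofInjective (repP a1 a2) hρinj
  let π : Equiv.Perm (Fin n) := e.extendSubtype
  have hπ : ∀ (q : Fin n) (h : attP a2 q), π q = repP a1 a2 ⟨q, h⟩ := by
    intro q h
    have h1 : π q = ↑(e ⟨q, h⟩) := Equiv.extendSubtype_apply_of_mem e q h
    have h2 : repP a1 a2 (e.symm (e ⟨q, h⟩)) = ↑(e ⟨q, h⟩) :=
      Equiv.apply_ofInjective_symm hρinj (e ⟨q, h⟩)
    rw [Equiv.symm_apply_apply] at h2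
    rw [h1, ← h2]
  have hatt1 : ∀ q, attP a1 q → a1.r (Sum.inl (π q)) (Sum.inr q) := by
    intro q h
    rw [hπ q (hfc q h)]
    exact repP_spec1 ⟨q, hfc q h⟩ h
  have hatt2 : ∀ q, attP a2 q → a2.r (Sum.inl (π q)) (Sum.inr q) := by
    intro q h
    rw [hπ q h]
    exact repP_spec2 h12 ⟨q, h⟩
  have hbot1 : ∀ p q : Fin n, p ≠ q → a1.r (Sum.inr p) (Sum.inr q) →
      attP a1 p ∧ attP a1 q := by
    intro p q hne h
    exact absurd (hno2 p q h) hne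
  have hbot2 : ∀ p q : Fin n, p ≠ q → a2.r (Sum.inr p) (Sum.inr q) →
      attP a2 p ∧ attP a2 q := by
    intro p q hne h
    constructor
    · by_contra hcp
      exact hne (hno1 p q h (htriv p (fun hf => hcp (hfc p hf))))
    · by_contra hcq
      exact hne (hno1 q p (a2.symm' h) (htriv q (fun hf => hcq (hfc q hf)))).symm
  have hattr1 : ∀ (q i : Fin n), a1.r (Sum.inl i) (Sum.inr q) → attP a1 q :=
    fun q i h => ⟨i, h⟩
  have hattr2 : ∀ (q i : Fin n), a2.r (Sum.inl i) (Sum.inr q) → attP a2 q :=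
    fun q i h => ⟨i, h⟩
  have hTop : ∀ p q : Fin n, a1.r (Sum.inl p) (Sum.inl q) → a2.r (Sum.inl p) (Sum.inl q) :=
    fun p q h => h12 h
  have hbase := mMirror (hn := hn) (pcT a1 + pcT a2) a1 a2 hTop le_rfl
  have hcuts := mCutList (hn := hn) (⇑π) (attP a1) (attP a2) hfc (mir a1) (mir a2)
    (List.finRange n) hbase
  have hperm := mPerm (hn := hn) π _ hcuts
  have es1 : {x | ∃ q ∈ List.finRange n, π q = x ∧ ¬ attP a1 q} =
      {x | ∃ q, π q = x ∧ ¬ attP a1 q} := by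
    ext x; simp [List.mem_finRange]
  have es2 : {x | ∃ q ∈ List.finRange n, π q = x ∧ ¬ attP a2 q} =
      {x | ∃ q, π q = x ∧ ¬ attP a2 q} := by
    ext x; simp [List.mem_finRange]
  have efinal : permB π
      (cutP {x | ∃ q ∈ List.finRange n, π q = x ∧ ¬ attP a1 q} (mir a1),
       cutP {x | ∃ q ∈ List.finRange n, π q = x ∧ ¬ attP a2 q} (mir a2)) = (a1, a2) := by
    show (Setoid.comap (Sum.map id ⇑π) _, Setoid.comap (Sum.map id ⇑π) _) = _
    rw [es1, es2, final_eq a1 π (attP a1) hatt1 hbot1 hattr1,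
      final_eq a2 π (attP a2) hatt2 hbot2 hattr2]
  rw [efinal] at hperm
  exact hperm

lemma mAll {hn : 2 ≤ n} : ∀ (N : ℕ) (a1 a2 : PN n), a1 ≤ a2 →
    pc a1 + pc a2 ≤ N → ((a1, a2) : PN n × PN n) ∈ Mset n hn := by
  intro N
  induction N with
  | zero =>
    intro a1 a2 _ hle
    exfalso
    have := pc_pos hn a1
    omega
  | succ N ih =>
    intro a1 a2 h12 hle
    by_cases hx2 : ∃ p q : Fin n, p ≠ q ∧ a1.r (Sum.inr p) (Sum.inr q)
    · obtain ⟨p, q, hpq, hrel⟩ := hx2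
      have hne : (Sum.inr p : Row2 n) ≠ Sum.inr q := by simp [hpq]
      have hrel2 : a2.r (Sum.inr p) (Sum.inr q) := h12 hrel
      have h12' : detach (Sum.inr p) a1 ≤ detach (Sum.inr p) a2 := by
        rintro x y (rfl | ⟨hx, hy, h⟩)
        · exact Or.inl rfl
        · exact Or.inr ⟨hx, hy, h12 h⟩
      have hm : pc (detach (Sum.inr p) a1) + pc (detach (Sum.inr p) a2) ≤ N := by
        have l1 := pc_detach_lt hrel hne
        have l2 := pc_detach_le (Sum.inr p) a2
        omega
      have hmem := ih (detach (Sum.inr p) a1) (detach (Sum.inr p) a2) h12' hm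
      have hmem2 := mJoinBoth (hn := hn) hpq hmem
      rw [show ((detach (Sum.inr p) a1, detach (Sum.inr p) a2) : PN n × PN n).1 =
          detach (Sum.inr p) a1 from rfl,
        show ((detach (Sum.inr p) a1, detach (Sum.inr p) a2) : PN n × PN n).2 =
          detach (Sum.inr p) a2 from rfl,
        joinP_detach hrel hne, joinP_detach hrel2 hne] at hmem2
      exact hmem2
    · by_cases hx1 : ∃ p q : Fin n, p ≠ q ∧ a2.r (Sum.inr p) (Sum.inr q) ∧
          (∀ z, a1.r (Sum.inr p) z → z = Sum.inr p)
      · obtain ⟨p, q, hpq, hrel, htriv⟩ := hx1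
        have hne : (Sum.inr p : Row2 n) ≠ Sum.inr q := by simp [hpq]
        have h12' : a1 ≤ detach (Sum.inr p) a2 := by
          intro x y h
          rcases eq_or_ne x (Sum.inr p) with rfl | hx
          · exact Or.inl (htriv y h).symm
          · rcases eq_or_ne y (Sum.inr p) with rfl | hy
            · exact Or.inl (htriv x (a1.symm' h))
            · exact Or.inr ⟨hx, hy, h12 h⟩
        have hm : pc a1 + pc (detach (Sum.inr p) a2) ≤ N := by
          have l1 := pc_detach_lt hrel hne
          omega
        have hmem := ih a1 (detach (Sum.inr p) a2) h12' hm
        have hmem2 := mJoinCoarse (hn := hn) hpq hmem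
        rw [show ((a1, detach (Sum.inr p) a2) : PN n × PN n).1 = a1 from rfl,
          show ((a1, detach (Sum.inr p) a2) : PN n × PN n).2 =
            detach (Sum.inr p) a2 from rfl,
          joinP_detach hrel hne] at hmem2
        exact hmem2
      · have hno2 : ∀ p q : Fin n, a1.r (Sum.inr p) (Sum.inr q) → p = q := by
          intro p q h
          by_contra hne
          exact hx2 ⟨p, q, hne, h⟩
        have hno1 : ∀ p q : Fin n, a2.r (Sum.inr p) (Sum.inr q) →
            (∀ z, a1.r (Sum.inr p) z → z = Sum.inr p) → p = q := by
          intro p q h ht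
          by_contra hne
          exact hx1 ⟨p, q, hne, h, ht⟩
        exact case3 a1 a2 h12 hno2 hno1

end Main
/-- for `n ≥ 2`, every 2-ramified partition of `[n] ⊔ [n]′` is a
finite `∘`-product of elements of `G_n`. -/
theorem Gset_generates (n : ℕ) (hn : 2 ≤ n) (a : PN n × PN n) (ha : a.1 ≤ a.2) :
    ∃ (hd : PN n × PN n) (tl : List (PN n × PN n)),
      hd ∈ Gset n hn ∧ (∀ g ∈ tl, g ∈ Gset n hn) ∧ tl.foldl rcomp hd = a := by
  have := mAll (hn := hn) (pc a.1 + pc a.2) a.1 a.2 ha le_rfl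
  rw [show (a.1, a.2) = a from rfl] at this
  exact this

end RamifiedPartition
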